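/- arXiv:1208.0687 — 2 statements merged into one kernel-verified Lean document; each statement's English description precedes it below -/
import Mathlib

section
/- Let L ∈ ℕ and let K ∈ L¹(ℝ) satisfy ∫K = 1, ∫ x^l K(x) dx = 0 for l = 1, …, L, and ∫ |x|^{L+1}|K(x)| dx < ∞. Then for every s ∈ [0, L+1] there is a constant C > 0 such that |𝓕K(u) − 1| ≤ C·|u|^s for all u ∈ ℝ; in particular sup_{u ≠ 0} |u|^{−s} |𝓕K(u) − 1| < ∞. -/
open MeasureTheory Complex Real Filter

noncomputable def Ft (f : ℝ → ℂ) (u : ℝ) : ℂ :=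
  ∫ x : ℝ, Complex.exp (Complex.I * u * x) * f x

noncomputable def FtInv (g : ℝ → ℂ) (x : ℝ) : ℂ :=
  (2 * Real.pi)⁻¹ • ∫ u : ℝ, Complex.exp (-(Complex.I * u * x)) * g u

/-- Squared Sobolev norm `‖f‖²_{H^s} = ∫ ⟨u⟩^{2s} |𝓕f(u)|² du`. -/
noncomputable def sobNormSq (s : ℝ) (f : ℝ → ℂ) : ℝ :=
  ∫ u : ℝ, (1 + u ^ 2) ^ s * ‖Ft f u‖ ^ 2

noncomputable def sobNorm (s : ℝ) (f : ℝ → ℂ) : ℝ :=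
  (sobNormSq s f) ^ (1/2 : ℝ)

/-- Membership in the Sobolev space `H^s(ℝ)`. -/
def MemSobolev (s : ℝ) (f : ℝ → ℂ) : Prop :=
  MemLp f 2 volume ∧ Integrable (fun u : ℝ => (1 + u ^ 2) ^ s * ‖Ft f u‖ ^ 2)

lemma integral_ofReal'' {f : ℝ → ℝ} : ∫ x : ℝ, ((f x : ℝ) : ℂ) = ((∫ x, f x : ℝ) : ℂ) :=
  integral_ofReal

lemma expPoly_hasDerivAt (n : ℕ) (θ : ℝ) :
    HasDerivAt (fun t : ℝ => Complex.exp (Complex.I * t) -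
        ∑ l ∈ Finset.range (n+1), (Complex.I * t) ^ l / l.factorial)
      (Complex.I * (Complex.exp (Complex.I * θ) -
        ∑ l ∈ Finset.range n, (Complex.I * θ) ^ l / l.factorial)) θ := by
  have hexpC : HasDerivAt (fun z : ℂ => Complex.exp (Complex.I * z))
      (Complex.I * Complex.exp (Complex.I * θ)) (θ : ℂ) := by
    have := ((hasDerivAt_id (θ : ℂ)).const_mul Complex.I).cexp
    simpa [mul_comm] using this
  have hexp : HasDerivAt (fun t : ℝ => Complex.exp (Complex.I * t))
      (Complex.I * Complex.exp (Complex.I * θ)) θ := hexpC.comp_ofReal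
  have hsumC : HasDerivAt (fun z : ℂ => ∑ l ∈ Finset.range (n+1), (Complex.I * z) ^ l / l.factorial)
      (Complex.I * ∑ l ∈ Finset.range n, (Complex.I * θ) ^ l / l.factorial) (θ : ℂ) := by
    have h : ∀ l ∈ Finset.range (n+1), HasDerivAt (fun z : ℂ => (Complex.I * z) ^ l / l.factorial)
        ((l : ℂ) * (Complex.I * θ) ^ (l - 1) * Complex.I / l.factorial) (θ : ℂ) := by
      intro l _
      have h1 : HasDerivAt (fun z : ℂ => Complex.I * z) Complex.I (θ : ℂ) :=
        by simpa using (hasDerivAt_id (θ : ℂ)).const_mul Complex.I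
      have h2 := (hasDerivAt_pow l (Complex.I * θ)).comp (θ : ℂ) h1
      simpa [div_eq_mul_inv, mul_comm, mul_assoc, mul_left_comm] using h2.div_const (l.factorial : ℂ)
    have := HasDerivAt.fun_sum h
    refine this.congr_deriv ?_
    rw [Finset.sum_range_succ' (fun l => (l : ℂ) * (Complex.I * θ) ^ (l - 1) * Complex.I / l.factorial) n]
    simp only [Nat.cast_zero, zero_mul, zero_div, add_zero]
    rw [Finset.mul_sum]
    refine Finset.sum_congr rfl fun l _ => ?_
    have hl1 : ((l:ℂ)+1) ≠ 0 := Nat.cast_add_one_ne_zero l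
    have hlf : (l.factorial : ℂ) ≠ 0 := Nat.cast_ne_zero.2 l.factorial_ne_zero
    have hfac : (((l+1).factorial : ℕ) : ℂ) = ((l:ℂ)+1) * l.factorial := by
      push_cast [Nat.factorial_succ]; ring
    rw [Nat.add_sub_cancel, hfac]
    push_cast
    field_simp
  exact (hexp.sub hsumC.comp_ofReal).congr_deriv (by ring)

lemma taylor_exp_bound (n : ℕ) (θ : ℝ) :
    ‖Complex.exp (Complex.I * θ) - ∑ l ∈ Finset.range n, (Complex.I * θ) ^ l / l.factorial‖
      ≤ |θ| ^ n := by
  induction n generalizing θ with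
  | zero => simp [Complex.norm_exp]
  | succ n ih =>
    set g : ℕ → ℝ → ℂ := fun m t => Complex.exp (Complex.I * t) -
      ∑ l ∈ Finset.range m, (Complex.I * t) ^ l / l.factorial with hg
    have hcont : Continuous fun t : ℝ => Complex.I * g n t := by
      simp only [hg]; fun_prop
    have hderiv : ∀ t ∈ Set.uIcc (0:ℝ) θ, HasDerivAt (g (n+1)) (Complex.I * g n t) t :=
      fun t _ => expPoly_hasDerivAt n t
    have hint : IntervalIntegrable (fun t => Complex.I * g n t) MeasureTheory.volume 0 θ :=
      hcont.intervalIntegrable 0 θ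
    have key := intervalIntegral.integral_eq_sub_of_hasDerivAt hderiv hint
    have hg0 : g (n+1) 0 = 0 := by
      simp [hg, Finset.sum_range_succ']
    rw [hg0, sub_zero] at key
    have hb : ∀ t ∈ Set.uIoc (0:ℝ) θ, ‖Complex.I * g n t‖ ≤ |θ| ^ n := by
      intro t ht
      have ht' : |t| ≤ |θ| := by
        rcases Set.mem_uIoc.1 ht with h | h
        · rw [abs_le]; constructor <;> [linarith [abs_nonneg θ, le_abs_self θ]; linarith [le_abs_self θ]]
        · rw [abs_le]; constructor <;> [linarith [neg_abs_le θ]; linarith [abs_nonneg θ]]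
      calc ‖Complex.I * g n t‖ = ‖g n t‖ := by simp
        _ ≤ |t| ^ n := ih t
        _ ≤ |θ| ^ n := pow_le_pow_left₀ (abs_nonneg t) ht' n
    calc ‖g (n+1) θ‖ = ‖∫ t in (0:ℝ)..θ, Complex.I * g n t‖ := by rw [key]
      _ ≤ |θ| ^ n * |θ - 0| := intervalIntegral.norm_integral_le_of_norm_le_const hb
      _ = |θ| ^ (n+1) := by rw [sub_zero]; ring

/-- for a kernel of order `L` with finite `(L+1)`-st absolute moment,
`|𝓕K(u) − 1| ≤ C|u|^s` for every `s ∈ [0, L+1]`. -/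
theorem kernel_fourier_taylor
    (L : ℕ) (K : ℝ → ℝ) (hK1 : Integrable K)
    (hKint : ∫ x : ℝ, K x = 1)
    (hmom : ∀ l : ℕ, 1 ≤ l → l ≤ L → ∫ x : ℝ, x ^ l * K x = 0)
    (habs : Integrable (fun x : ℝ => |x| ^ (L + 1) * |K x|)) :
    ∀ s : ℝ, 0 ≤ s → s ≤ L + 1 →
      ∃ C > 0,
        (∀ u : ℝ, ‖Ft (fun x : ℝ => (K x : ℂ)) u - 1‖ ≤ C * |u| ^ s) ∧
        (∀ u : ℝ, u ≠ 0 → |u| ^ (-s) * ‖Ft (fun x : ℝ => (K x : ℂ)) u - 1‖ ≤ C) := by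
  intro s hs0 hs1
  have hmeas := hK1.aestronglyMeasurable
  -- integrability of x^l * K for l ≤ L+1
  have hIl : ∀ l : ℕ, l ≤ L + 1 → Integrable (fun x : ℝ => x ^ l * K x) := by
    intro l hl
    refine (hK1.abs.add habs).mono
      (((continuous_pow l).aestronglyMeasurable).mul hmeas) ?_
    filter_upwards with x
    have h1 : |x| ^ l ≤ 1 + |x| ^ (L+1) := by
      rcases le_or_gt |x| 1 with h | h
      · have : |x| ^ l ≤ 1 := pow_le_one₀ (abs_nonneg x) h
        nlinarith [pow_nonneg (abs_nonneg x) (L+1)]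
      · have : |x| ^ l ≤ |x| ^ (L+1) := pow_le_pow_right₀ h.le hl
        nlinarith
    have hcalc : ‖x ^ l * K x‖ ≤ |K x| + |x| ^ (L+1) * |K x| := by
      rw [Real.norm_eq_abs, abs_mul, _root_.abs_pow]
      nlinarith [abs_nonneg (K x), mul_le_mul_of_nonneg_right h1 (abs_nonneg (K x))]
    refine hcalc.trans ?_
    simp only [Pi.add_apply, Real.norm_eq_abs]
    exact le_abs_self _
  -- the key identity
  have key : ∀ u : ℝ, Ft (fun x : ℝ => (K x : ℂ)) u - 1 =
      ∫ x : ℝ, (Complex.exp (Complex.I * u * x) -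
        ∑ l ∈ Finset.range (L+1), (Complex.I * u * x) ^ l / l.factorial) * K x := by
    intro u
    have hIexp : Integrable (fun x : ℝ => Complex.exp (Complex.I * u * x) * (K x : ℂ)) := by
      refine (hK1.norm.mono' ((Continuous.aestronglyMeasurable (by fun_prop)).mul
        (Complex.continuous_ofReal.comp_aestronglyMeasurable hmeas)) ?_)
      filter_upwards with x
      simp [Complex.norm_exp, Complex.norm_real]
    have hTl : ∀ l : ℕ, l ≤ L + 1 → Integrable
        (fun x : ℝ => ((Complex.I * u) ^ l / l.factorial) * ((x ^ l * K x : ℝ) : ℂ)) :=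
      fun l hl => ((hIl l hl).ofReal).const_mul _
    have hsplit : (fun x : ℝ => (Complex.exp (Complex.I * u * x) -
          ∑ l ∈ Finset.range (L+1), (Complex.I * u * x) ^ l / l.factorial) * (K x : ℂ)) =
        fun x : ℝ => Complex.exp (Complex.I * u * x) * (K x : ℂ) -
          ∑ l ∈ Finset.range (L+1), ((Complex.I * u) ^ l / l.factorial) * ((x ^ l * K x : ℝ) : ℂ) := by
      funext x
      rw [sub_mul, Finset.sum_mul]
      congr 1
      refine Finset.sum_congr rfl fun l _ => ?_
      push_cast
      rw [mul_pow]
      ring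
    have hmem : ∀ l ∈ Finset.range (L+1), Integrable
        (fun x : ℝ => ((Complex.I * u) ^ l / l.factorial) * ((x ^ l * K x : ℝ) : ℂ)) := by
      intro l hl
      exact hTl l (by have := Finset.mem_range.1 hl; omega)
    rw [hsplit, integral_sub hIexp (integrable_finset_sum _ hmem),
      integral_finset_sum _ hmem]
    have hsumval : (∑ l ∈ Finset.range (L+1),
        ∫ x : ℝ, ((Complex.I * u) ^ l / l.factorial) * ((x ^ l * K x : ℝ) : ℂ)) = 1 := by
      rw [Finset.sum_range_succ']
      have h0 : (∫ x : ℝ, ((Complex.I * u) ^ 0 / (0:ℕ).factorial) * ((x ^ 0 * K x : ℝ) : ℂ)) = 1 := by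
        simp only [pow_zero, Nat.factorial_zero, Nat.cast_one, div_one, one_mul]
        rw [integral_ofReal'']
        norm_cast
      rw [h0]
      have hz : ∀ l ∈ Finset.range L,
          (∫ x : ℝ, ((Complex.I * u) ^ (l+1) / (l+1).factorial) * ((x ^ (l+1) * K x : ℝ) : ℂ)) = 0 := by
        intro l hl
        rw [integral_const_mul, integral_ofReal'',
          hmom (l+1) (Nat.succ_le_succ (Nat.zero_le l)) (Nat.succ_le_of_lt (Finset.mem_range.1 hl))]
        simp
      rw [Finset.sum_congr rfl hz]
      simp
    rw [hsumval]
    rfl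
  -- the two global bounds
  set M : ℝ := ∫ x : ℝ, |x| ^ (L + 1) * |K x| with hM
  have hM0 : 0 ≤ M := integral_nonneg fun x => by positivity
  have hbound : ∀ u : ℝ, ‖Ft (fun x : ℝ => (K x : ℂ)) u - 1‖ ≤ M * |u| ^ (L+1) := by
    intro u
    rw [key u]
    have := norm_integral_le_of_norm_le (μ := volume)
      (f := fun x : ℝ => (Complex.exp (Complex.I * u * x) -
        ∑ l ∈ Finset.range (L+1), (Complex.I * u * x) ^ l / l.factorial) * (K x : ℂ))
      (g := fun x : ℝ => |u| ^ (L+1) * (|x| ^ (L+1) * |K x|))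
      (habs.const_mul _) ?_
    · calc ‖_‖ ≤ ∫ x : ℝ, |u| ^ (L+1) * (|x| ^ (L+1) * |K x|) := this
        _ = |u| ^ (L+1) * M := by rw [integral_const_mul]
        _ = M * |u| ^ (L+1) := by ring
    · filter_upwards with x
      rw [norm_mul]
      have hco : Complex.I * u * x = Complex.I * ((u * x : ℝ) : ℂ) := by push_cast; ring
      have := taylor_exp_bound (L+1) (u * x)
      rw [hco]
      calc ‖Complex.exp (Complex.I * ((u*x : ℝ):ℂ)) -
            ∑ l ∈ Finset.range (L+1), (Complex.I * ((u*x:ℝ):ℂ)) ^ l / l.factorial‖ * ‖((K x : ℝ):ℂ)‖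
          ≤ |u * x| ^ (L+1) * |K x| := by
            apply mul_le_mul this (le_of_eq (Complex.norm_real _)) (norm_nonneg _) (by positivity)
        _ = |u| ^ (L+1) * (|x| ^ (L+1) * |K x|) := by rw [abs_mul, mul_pow]; ring
  set A : ℝ := (∫ x : ℝ, |K x|) + 1 with hA
  have hA1 : 1 ≤ A := by
    have : 0 ≤ ∫ x : ℝ, |K x| := integral_nonneg fun x => abs_nonneg _
    linarith
  have hbound2 : ∀ u : ℝ, ‖Ft (fun x : ℝ => (K x : ℂ)) u - 1‖ ≤ A := by
    intro u
    have h1 : ‖Ft (fun x : ℝ => (K x : ℂ)) u‖ ≤ ∫ x : ℝ, |K x| := by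
      refine norm_integral_le_of_norm_le hK1.abs ?_
      filter_upwards with x
      rw [norm_mul]
      simp [Complex.norm_exp, Complex.norm_real]
    calc ‖Ft (fun x : ℝ => (K x : ℂ)) u - 1‖ ≤ ‖Ft (fun x : ℝ => (K x : ℂ)) u‖ + ‖(1:ℂ)‖ :=
          norm_sub_le _ _
      _ ≤ (∫ x : ℝ, |K x|) + 1 := by rw [norm_one]; linarith
      _ = A := rfl
  have hmain : ∀ u : ℝ, ‖Ft (fun x : ℝ => (K x : ℂ)) u - 1‖ ≤ (A + M) * |u| ^ s := by
    intro u
    rcases eq_or_ne u 0 with rfl | hu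
    · have := hbound 0
      simp only [abs_zero, zero_pow (Nat.succ_ne_zero L), mul_zero] at this
      have h2 : (0:ℝ) ≤ (A + M) * |(0:ℝ)| ^ s := by
        have := Real.rpow_nonneg (abs_nonneg (0:ℝ)) s
        positivity
      linarith
    · have hu0 : 0 < |u| := abs_pos.2 hu
      rcases le_or_gt |u| 1 with h | h
      · have h1 : |u| ^ ((L:ℝ)+1) ≤ |u| ^ s := Real.rpow_le_rpow_of_exponent_ge hu0 h hs1
        have h2 : |u| ^ (L+1) = |u| ^ ((L:ℝ)+1) := by
          rw [← Real.rpow_natCast]; norm_num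
        calc ‖Ft (fun x : ℝ => (K x : ℂ)) u - 1‖ ≤ M * |u| ^ (L+1) := hbound u
          _ = M * |u| ^ ((L:ℝ)+1) := by rw [h2]
          _ ≤ M * |u| ^ s := mul_le_mul_of_nonneg_left h1 hM0
          _ ≤ (A + M) * |u| ^ s := by
              have := Real.rpow_nonneg (abs_nonneg u) s
              nlinarith
      · have h1 : (1:ℝ) ≤ |u| ^ s := Real.one_le_rpow h.le hs0
        calc ‖Ft (fun x : ℝ => (K x : ℂ)) u - 1‖ ≤ A := hbound2 u
          _ = A * 1 := by ring
          _ ≤ A * |u| ^ s := by nlinarith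
          _ ≤ (A + M) * |u| ^ s := by nlinarith
  refine ⟨A + M, by linarith, hmain, ?_⟩
  intro u hu
  have hu0 : 0 < |u| := abs_pos.2 hu
  calc |u| ^ (-s) * ‖Ft (fun x : ℝ => (K x : ℂ)) u - 1‖
      ≤ |u| ^ (-s) * ((A + M) * |u| ^ s) :=
        mul_le_mul_of_nonneg_left (hmain u) (Real.rpow_nonneg (abs_nonneg u) _)
    _ = (A + M) * (|u| ^ (-s) * |u| ^ s) := by ring
    _ = A + M := by rw [← Real.rpow_add hu0]; simp
end

section
/- Let ψ : ℝ → ℂ be continuously differentiable with |ψ(u)| + |ψ′(u)| ≤ C·⟨u⟩^N for some N ∈ ℕ, and let w ∈ 𝒮(ℝ) be a Schwartz function. Define ζ^c(x) = (ix+1)·w(x). Then for every x ∈ ℝ: 𝓕⁻¹[ψ(u)·𝓕ζ^c(u)](x) = (1+ix)·𝓕⁻¹[ψ(u)·𝓕w(u)](x) − 𝓕⁻¹[ψ′(u)·𝓕w(u)](x). (Decomposition identity (18)/(19) for the deconvolution operator applied to the continuous part.) -/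
open MeasureTheory Complex Real Filter

open scoped FourierTransform

lemma ft_eq (f : ℝ → ℂ) (u : ℝ) : Ft f u = 𝓕 f ((-(2 * π)⁻¹) * u) := by
  rw [Ft, Real.fourier_real_eq_integral_exp_smul]
  congr 1
  ext v
  rw [smul_eq_mul]
  congr 1
  have hπ : (π : ℝ) ≠ 0 := Real.pi_ne_zero
  congr 1
  push_cast [RCLike.inner_apply, conj_trivial]
  field_simp [Complex.ofReal_ne_zero.mpr hπ]

section
variable (w : SchwartzMap ℝ ℂ)

noncomputable def scaleCLM : ℝ →L[ℝ] ℝ := (-(2 * π)⁻¹) • ContinuousLinearMap.id ℝ ℝ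

lemma scale_htg : Function.HasTemperateGrowth (fun u : ℝ => (-(2 * π)⁻¹) * u) := by
  have : (fun u : ℝ => (-(2 * π)⁻¹) * u) = ⇑scaleCLM := by
    ext u; simp [scaleCLM, smul_eq_mul]
  rw [this]
  exact scaleCLM.hasTemperateGrowth

lemma scale_upper : ∃ (k : ℕ) (Cc : ℝ), ∀ u : ℝ, ‖u‖ ≤ Cc * (1 + ‖(-(2 * π)⁻¹) * u‖) ^ k := by
  refine ⟨1, 2 * π, fun u => ?_⟩
  have hπ : (0:ℝ) < 2 * π := by positivity
  rw [pow_one, norm_mul]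
  have : ‖(-(2 * π)⁻¹)‖ = (2 * π)⁻¹ := by
    rw [norm_neg, Real.norm_eq_abs, abs_of_pos (by positivity)]
  rw [this]
  rw [mul_add, mul_one]
  have : 2 * π * ((2 * π)⁻¹ * ‖u‖) = ‖u‖ := by field_simp
  rw [this]
  linarith [norm_nonneg u]

/-- Schwartz representative of `Ft ⇑v`. -/
noncomputable def FtS (v : SchwartzMap ℝ ℂ) : SchwartzMap ℝ ℂ :=
  SchwartzMap.compCLM ℝ scale_htg scale_upper (SchwartzMap.fourierTransformCLM ℂ v)

lemma FtS_apply (v : SchwartzMap ℝ ℂ) (u : ℝ) : FtS v u = Ft ⇑v u := by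
  rw [ft_eq]
  rfl

end

lemma mulI_htg : Function.HasTemperateGrowth (fun y : ℝ => (y : ℂ) * Complex.I) := by
  have : (fun y : ℝ => (y : ℂ) * Complex.I) = ⇑(Complex.I • Complex.ofRealCLM) := by
    ext y; simp [smul_eq_mul]; ring
  rw [this]
  exact (Complex.I • Complex.ofRealCLM).hasTemperateGrowth

/-- The Schwartz map `y ↦ w y * (y * I)`. -/
noncomputable def mulArg (w : SchwartzMap ℝ ℂ) : SchwartzMap ℝ ℂ :=
  SchwartzMap.bilinLeftCLM (ContinuousLinearMap.mul ℝ ℂ) mulI_htg w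

lemma mulArg_apply (w : SchwartzMap ℝ ℂ) (y : ℝ) : mulArg w y = w y * ((y : ℂ) * Complex.I) := rfl

lemma hasDerivAt_Ft (w : SchwartzMap ℝ ℂ) (u : ℝ) :
    HasDerivAt (Ft ⇑w) (Ft ⇑(mulArg w) u) u := by
  set c : ℝ := -(2 * π)⁻¹ with hc
  have hint : Integrable (fun x : ℝ => x • (w x : ℂ)) := by
    refine (w.integrable_pow_mul volume 1).mono'
      (continuous_id.smul w.continuous).aestronglyMeasurable
      (Eventually.of_forall fun x => ?_)
    rw [norm_smul]
    simp [Real.norm_eq_abs]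
  have h1 := Real.hasDerivAt_fourier w.integrable hint (c * u)
  have h2 : HasDerivAt (fun u : ℝ => c * u) c u := by
    simpa using (hasDerivAt_id u).const_mul c
  have h3 := h1.scomp u h2
  have hfe : 𝓕 ⇑w ∘ HMul.hMul c = Ft ⇑w := by
    ext v; simp only [Function.comp_apply]; rw [ft_eq]
  rw [hfe] at h3
  convert h3 using 1
  · rfl
  rw [Ft, Real.fourier_real_eq_integral_exp_smul, ← integral_smul]
  congr 1
  ext v
  rw [smul_smul, smul_eq_mul]
  have hπ : (π : ℝ) ≠ 0 := Real.pi_ne_zero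
  have hπc : (π : ℂ) ≠ 0 := Complex.ofReal_ne_zero.mpr hπ
  have harg : Complex.ofReal (-2 * π * v * (c * u)) * Complex.I = Complex.I * u * v := by
    push_cast [RCLike.inner_apply, conj_trivial, hc]
    field_simp
  rw [harg, mulArg_apply, Complex.real_smul]
  have : ((c : ℝ) : ℂ) = -(2 * π : ℂ)⁻¹ := by push_cast [hc]; ring
  rw [this]
  field_simp

lemma norm_exp_I_mul (a b : ℝ) : ‖Complex.exp (Complex.I * a * b)‖ = 1 := by
  rw [Complex.norm_exp]
  simp [Complex.mul_re]

lemma norm_exp_neg_I_mul (a b : ℝ) : ‖Complex.exp (-(Complex.I * a * b))‖ = 1 := by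
  rw [Complex.norm_exp]
  simp [Complex.mul_re]

lemma integrable_exp_mul (u : ℝ) (v : SchwartzMap ℝ ℂ) :
    Integrable (fun y : ℝ => Complex.exp (Complex.I * u * y) * v y) := by
  refine v.integrable.norm.mono'
    ((Complex.continuous_exp.comp (by continuity)).mul v.continuous).aestronglyMeasurable
    (Eventually.of_forall fun y => ?_)
  rw [norm_mul, norm_exp_I_mul, one_mul]

lemma Ft_split (w : SchwartzMap ℝ ℂ) (u : ℝ) :
    Ft (fun y : ℝ => ((y : ℂ) * Complex.I + 1) * w y) u = Ft ⇑w u + Ft ⇑(mulArg w) u := by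
  rw [Ft, Ft, Ft, ← integral_add (integrable_exp_mul u w) (integrable_exp_mul u (mulArg w))]
  congr 1
  ext y
  rw [mulArg_apply]
  ring

lemma one_add_pow_le (t : ℝ) (ht : 0 ≤ t) (N : ℕ) : (1 + t) ^ N ≤ 2 ^ N * (1 + t ^ N) := by
  rcases le_total t 1 with h | h
  · calc (1 + t) ^ N ≤ 2 ^ N := by
          apply pow_le_pow_left₀ (by linarith) (by linarith)
       _ ≤ 2 ^ N * (1 + t ^ N) := by
          nth_rewrite 1 [← mul_one ((2:ℝ) ^ N)]
          have : (0:ℝ) ≤ t ^ N := by positivity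
          have h2 : (0:ℝ) < 2 ^ N := by positivity
          nlinarith
  · calc (1 + t) ^ N ≤ (2 * t) ^ N := by
          apply pow_le_pow_left₀ (by linarith) (by linarith)
       _ = 2 ^ N * t ^ N := by rw [mul_pow]
       _ ≤ 2 ^ N * (1 + t ^ N) := by
          gcongr
          linarith

lemma integrable_mul_schwartz (G : SchwartzMap ℝ ℂ) (φ : ℝ → ℂ) (hφc : Continuous φ)
    (C : ℝ) (N : ℕ) (hφ : ∀ u : ℝ, ‖φ u‖ ≤ C * (1 + |u|) ^ N) :
    Integrable (fun u : ℝ => φ u * G u) := by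
  have hC0 : 0 ≤ C := by
    have h0 := hφ 0
    simp only [abs_zero, add_zero, one_pow, mul_one] at h0
    exact le_trans (norm_nonneg _) h0
  refine Integrable.mono'
    (((G.integrable.norm.add (G.integrable_pow_mul volume N)).const_mul (C * 2 ^ N)))
    (hφc.mul G.continuous).aestronglyMeasurable (Eventually.of_forall fun u => ?_)
  rw [norm_mul]
  have h1 : ‖φ u‖ * ‖G u‖ ≤ (C * (1 + |u|) ^ N) * ‖G u‖ := by
    gcongr
    exact hφ u
  refine h1.trans ?_
  have h2 : (1 + |u|) ^ N ≤ 2 ^ N * (1 + |u| ^ N) := one_add_pow_le _ (abs_nonneg u) N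
  have h3 : C * (1 + |u|) ^ N * ‖G u‖ ≤ C * (2 ^ N * (1 + |u| ^ N)) * ‖G u‖ := by
    gcongr
  refine h3.trans (le_of_eq ?_)
  simp only [Pi.add_apply, Real.norm_eq_abs]
  ring

lemma rpow_bound (u : ℝ) (N : ℕ) : (1 + u ^ 2 : ℝ) ^ ((N : ℝ) / 2) ≤ (1 + |u|) ^ N := by
  have h1 : (1 + u ^ 2 : ℝ) ^ ((N : ℝ) / 2) ≤ ((1 + |u|) ^ 2) ^ ((N : ℝ) / 2) :=
    Real.rpow_le_rpow (by positivity) (by nlinarith [_root_.sq_abs u, abs_nonneg u]) (by positivity)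
  refine h1.trans_eq ?_
  rw [← Real.rpow_natCast (1 + |u|) 2, ← Real.rpow_mul (by positivity)]
  rw [show ((2 : ℕ) : ℝ) * ((N : ℝ) / 2) = (N : ℝ) by push_cast; ring]
  rw [Real.rpow_natCast]

/-- decomposition identity (18)/(19): for a C¹ multiplier `ψ` of
polynomial growth, a Schwartz function `w` and `ζ^c(x) = (ix+1)w(x)`,
`𝓕⁻¹[ψ 𝓕ζ^c] = (1+ix) 𝓕⁻¹[ψ 𝓕w] − 𝓕⁻¹[ψ' 𝓕w]` pointwise. -/
theorem deconv_decomposition_identity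
    (C : ℝ) (hC : 0 < C) (N : ℕ)
    (ψ : ℝ → ℂ) (hψ : ContDiff ℝ 1 ψ)
    (hbound : ∀ u : ℝ, ‖ψ u‖ + ‖deriv ψ u‖ ≤ C * (1 + u ^ 2) ^ ((N : ℝ) / 2))
    (w : SchwartzMap ℝ ℂ) :
    ∀ x : ℝ,
      FtInv (fun u : ℝ => ψ u * Ft (fun y : ℝ => (y * Complex.I + 1) * w y) u) x
        = (1 + x * Complex.I) * FtInv (fun u : ℝ => ψ u * Ft (fun y : ℝ => w y) u) x
          - FtInv (fun u : ℝ => deriv ψ u * Ft (fun y : ℝ => w y) u) x := by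
  intro x
  have hψc : Continuous ψ := hψ.continuous
  have hψ'c : Continuous (deriv ψ) := hψ.continuous_deriv le_rfl
  have hψb : ∀ u : ℝ, ‖ψ u‖ ≤ C * (1 + |u|) ^ N := fun u => by
    have h := hbound u
    have h2 := rpow_bound u N
    nlinarith [norm_nonneg (deriv ψ u),
      Real.rpow_nonneg (by positivity : (0:ℝ) ≤ 1 + u ^ 2) ((N:ℝ)/2)]
  have hψ'b : ∀ u : ℝ, ‖deriv ψ u‖ ≤ C * (1 + |u|) ^ N := fun u => by
    have h := hbound u
    have h2 := rpow_bound u N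
    nlinarith [norm_nonneg (ψ u),
      Real.rpow_nonneg (by positivity : (0:ℝ) ≤ 1 + u ^ 2) ((N:ℝ)/2)]
  have hcexp : Continuous fun u : ℝ => Complex.exp (-(Complex.I * u * x)) :=
    Complex.continuous_exp.comp (by continuity)
  -- integrability of the three pieces
  have hI1 : Integrable (fun u : ℝ => Complex.exp (-(Complex.I * u * x)) * (ψ u * Ft ⇑w u)) := by
    have h := integrable_mul_schwartz (FtS w)
      (fun u => Complex.exp (-(Complex.I * u * x)) * ψ u) (hcexp.mul hψc) C N
      (fun u => by rw [norm_mul, norm_exp_neg_I_mul, one_mul]; exact hψb u)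
    have heq : (fun u : ℝ => Complex.exp (-(Complex.I * u * x)) * ψ u * (FtS w) u)
        = fun u : ℝ => Complex.exp (-(Complex.I * u * x)) * (ψ u * Ft ⇑w u) := by
      funext u; rw [FtS_apply]; ring
    rwa [heq] at h
  have hI2 : Integrable (fun u : ℝ =>
      Complex.exp (-(Complex.I * u * x)) * (deriv ψ u * Ft ⇑w u)) := by
    have h := integrable_mul_schwartz (FtS w)
      (fun u => Complex.exp (-(Complex.I * u * x)) * deriv ψ u) (hcexp.mul hψ'c) C N
      (fun u => by rw [norm_mul, norm_exp_neg_I_mul, one_mul]; exact hψ'b u)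
    have heq : (fun u : ℝ => Complex.exp (-(Complex.I * u * x)) * deriv ψ u * (FtS w) u)
        = fun u : ℝ => Complex.exp (-(Complex.I * u * x)) * (deriv ψ u * Ft ⇑w u) := by
      funext u; rw [FtS_apply]; ring
    rwa [heq] at h
  have hI3 : Integrable (fun u : ℝ =>
      Complex.exp (-(Complex.I * u * x)) * (ψ u * Ft ⇑(mulArg w) u)) := by
    have h := integrable_mul_schwartz (FtS (mulArg w))
      (fun u => Complex.exp (-(Complex.I * u * x)) * ψ u) (hcexp.mul hψc) C N
      (fun u => by rw [norm_mul, norm_exp_neg_I_mul, one_mul]; exact hψb u)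
    have heq : (fun u : ℝ => Complex.exp (-(Complex.I * u * x)) * ψ u * (FtS (mulArg w)) u)
        = fun u : ℝ => Complex.exp (-(Complex.I * u * x)) * (ψ u * Ft ⇑(mulArg w) u) := by
      funext u; rw [FtS_apply]; ring
    rwa [heq] at h
  -- H and its derivative
  have hderiv : ∀ u : ℝ, HasDerivAt
      (fun u : ℝ => Complex.exp (-(Complex.I * u * x)) * (ψ u * Ft ⇑w u))
      (Complex.exp (-(Complex.I * u * x)) *
        (-(Complex.I * x) * (ψ u * Ft ⇑w u)
          + (deriv ψ u * Ft ⇑w u + ψ u * Ft ⇑(mulArg w) u))) u := by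
    intro u
    have h0 : HasDerivAt (fun u : ℝ => (u : ℂ)) 1 u := by
      simpa using (hasDerivAt_id u).ofReal_comp
    have h1 : HasDerivAt (fun u : ℝ => -(Complex.I * u * x)) (-(Complex.I * x)) u := by
      have h2 := h0.mul_const (-(Complex.I * (x:ℂ)))
      convert h2 using 1
      · rfl
      · ext v; ring
      · ring
    have hA : HasDerivAt (fun u : ℝ => Complex.exp (-(Complex.I * u * x)))
        (Complex.exp (-(Complex.I * u * x)) * (-(Complex.I * x))) u := h1.cexp
    have hB : HasDerivAt ψ (deriv ψ u) u := (hψ.differentiable one_ne_zero u).hasDerivAt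
    have hCd := hasDerivAt_Ft w u
    have h3 := hA.mul (hB.mul hCd)
    convert h3 using 1
    · rfl
    · funext v; simp only [Pi.mul_apply]
    simp only [Pi.mul_apply]
    ring
  have hI' : Integrable (fun u : ℝ => Complex.exp (-(Complex.I * u * x)) *
      (-(Complex.I * x) * (ψ u * Ft ⇑w u)
        + (deriv ψ u * Ft ⇑w u + ψ u * Ft ⇑(mulArg w) u))) := by
    refine ((hI1.const_mul (-(Complex.I * x))).add (hI2.add hI3)).congr
      (Eventually.of_forall fun u => ?_)
    simp only [Pi.add_apply]
    ring
  have hzero := integral_eq_zero_of_hasDerivAt_of_integrable hderiv hI' hI1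
  have e1 : ∫ u : ℝ, (-(Complex.I * x) *
        (Complex.exp (-(Complex.I * u * x)) * (ψ u * Ft ⇑w u))
      + (Complex.exp (-(Complex.I * u * x)) * (deriv ψ u * Ft ⇑w u)
        + Complex.exp (-(Complex.I * u * x)) * (ψ u * Ft ⇑(mulArg w) u)))
      = ∫ u : ℝ, Complex.exp (-(Complex.I * u * x)) *
        (-(Complex.I * x) * (ψ u * Ft ⇑w u)
          + (deriv ψ u * Ft ⇑w u + ψ u * Ft ⇑(mulArg w) u)) :=
    integral_congr_ae (Eventually.of_forall fun u => by ring)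
  have hI1c : Integrable (fun u : ℝ => -(Complex.I * x) *
      (Complex.exp (-(Complex.I * u * x)) * (ψ u * Ft ⇑w u))) := hI1.const_mul _
  have hI23 : Integrable (fun u : ℝ =>
      Complex.exp (-(Complex.I * u * x)) * (deriv ψ u * Ft ⇑w u)
        + Complex.exp (-(Complex.I * u * x)) * (ψ u * Ft ⇑(mulArg w) u)) := hI2.add hI3
  rw [hzero, integral_add hI1c hI23, integral_add hI2 hI3, integral_const_mul] at e1
  -- unfold FtInv and conclude
  have hLHS : (fun u : ℝ => Complex.exp (-(Complex.I * u * x)) *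
      (ψ u * Ft (fun y : ℝ => (y * Complex.I + 1) * w y) u))
      = fun u : ℝ => Complex.exp (-(Complex.I * u * x)) * (ψ u * Ft ⇑w u)
        + Complex.exp (-(Complex.I * u * x)) * (ψ u * Ft ⇑(mulArg w) u) := by
    funext u
    rw [Ft_split]
    ring
  rw [FtInv, FtInv, FtInv, hLHS, integral_add hI1 hI3]
  rw [Complex.real_smul, Complex.real_smul, Complex.real_smul]
  linear_combination (((2 * π)⁻¹ : ℝ) : ℂ) * e1
end
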